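/- arXiv:0710.0655 — 11 statements merged into one kernel-verified Lean document; each statement's English description precedes it below -/
import Mathlib

section
/- Let V be a finite type and E : V → V → Prop a directed graph whose transitive closure is irreflexive (i.e., the graph is acyclic). Let w : V → ℝ be nonnegative vertex weights and let D ≥ 1 be a natural number such that every vertex has at most D in-neighbors, i.e., for every v the set {u | E u v} has cardinality at most D. Let V' be the set of vertices with no out-neighbors (sinks). Assume that for every vertex v not in V', 2·D·w(v) ≤ Σ_{u with E v u} w(u). Then Σ_{v ∈ V} w(v) ≤ 2 · Σ_{v ∈ V'} w(v). -/
/-- In a finite directed acyclic graph with nonnegative vertex weights, if every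
vertex has at most `D` in-neighbors and the weight of every non-sink vertex is at
most a `1/(2D)` fraction of the total weight of its out-neighbors, then the total
weight of the sinks is at least half the total weight. -/
theorem dag_sink_weight (V : Type*) [Fintype V] (E : V → V → Prop) [DecidableRel E]
    (hacyc : Irreflexive (Relation.TransGen E))
    (w : V → ℝ) (hw : ∀ v, 0 ≤ w v)
    (D : ℕ) (hD : 1 ≤ D)
    (hindeg : ∀ v : V, (Finset.univ.filter (fun u => E u v)).card ≤ D)
    (hgrow : ∀ v : V, (∃ u, E v u) →
      2 * (D : ℝ) * w v ≤ ∑ u ∈ Finset.univ.filter (fun u => E v u), w u) :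
    ∑ v, w v ≤ 2 * ∑ v ∈ Finset.univ.filter (fun v => ∀ u, ¬ E v u), w v := by
  classical
  set S : Finset V := Finset.univ.filter (fun v => ∀ u, ¬ E v u) with hS
  have hDpos : (0:ℝ) < D := by exact_mod_cast hD
  have h1 : 2 * (D:ℝ) * ∑ v ∈ Sᶜ, w v ≤
      ∑ v ∈ Sᶜ, ∑ u ∈ Finset.univ.filter (fun u => E v u), w u := by
    rw [Finset.mul_sum]
    refine Finset.sum_le_sum fun v hv => hgrow v ?_
    simp only [hS, Finset.mem_compl, Finset.mem_filter, Finset.mem_univ, true_and] at hv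
    push_neg at hv
    exact hv
  have h2 : ∑ v ∈ Sᶜ, ∑ u ∈ Finset.univ.filter (fun u => E v u), w u ≤
      (D:ℝ) * ∑ u, w u := by
    calc ∑ v ∈ Sᶜ, ∑ u ∈ Finset.univ.filter (fun u => E v u), w u
        = ∑ v ∈ Sᶜ, ∑ u, if E v u then w u else 0 := by
          simp [Finset.sum_filter]
      _ = ∑ u, ∑ v ∈ Sᶜ, if E v u then w u else 0 := Finset.sum_comm
      _ ≤ ∑ u, (D:ℝ) * w u := by
          refine Finset.sum_le_sum fun u _ => ?_
          rw [← Finset.sum_filter, Finset.sum_const, nsmul_eq_mul]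
          have hcard : ((Sᶜ).filter (fun v => E v u)).card ≤ D := by
            refine le_trans (Finset.card_le_card ?_) (hindeg u)
            intro v hv
            simp only [Finset.mem_filter] at hv ⊢
            exact ⟨Finset.mem_univ v, hv.2⟩
          exact mul_le_mul_of_nonneg_right (by exact_mod_cast hcard) (hw u)
      _ = (D:ℝ) * ∑ u, w u := (Finset.mul_sum _ _ _).symm
  have htot : ∑ v ∈ S, w v + ∑ v ∈ Sᶜ, w v = ∑ v, w v := Finset.sum_add_sum_compl S w
  have hkey : 2 * ∑ v ∈ Sᶜ, w v ≤ ∑ v, w v := by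
    have := le_trans h1 h2
    nlinarith
  linarith
end

section
/- Let X, Y be n×n real matrices and X', Y' be m×m real matrices. If the four matrices X − Y, X + Y, X' − Y', and X' + Y' are all positive semidefinite, then the Kronecker product difference X ⊗ X' − Y ⊗ Y' is positive semidefinite. -/
open Matrix
open scoped Kronecker

lemma psd_kron {n m : ℕ} {A : Matrix (Fin n) (Fin n) ℝ} {B : Matrix (Fin m) (Fin m) ℝ}
    (hA : A.PosSemidef) (hB : B.PosSemidef) : (A ⊗ₖ B).PosSemidef := by
  exact hA.kronecker hB

/-- If `X − Y`, `X + Y`, `X' − Y'`, and `X' + Y'` are all positive semidefinite, then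
the Kronecker product difference `X ⊗ X' − Y ⊗ Y'` is positive semidefinite. -/
theorem kronecker_psd_of_psd (n m : ℕ)
    (X Y : Matrix (Fin n) (Fin n) ℝ) (X' Y' : Matrix (Fin m) (Fin m) ℝ)
    (h1 : (X - Y).PosSemidef) (h2 : (X + Y).PosSemidef)
    (h3 : (X' - Y').PosSemidef) (h4 : (X' + Y').PosSemidef) :
    (X ⊗ₖ X' - Y ⊗ₖ Y').PosSemidef := by
  have key : X ⊗ₖ X' - Y ⊗ₖ Y' =
      (2⁻¹ : ℝ) • ((X - Y) ⊗ₖ (X' + Y') + (X + Y) ⊗ₖ (X' - Y')) := by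
    ext ⟨i,j⟩ ⟨k,l⟩
    simp [Matrix.kroneckerMap_apply]
    ring
  rw [key]
  have hsum := (psd_kron h1 h4).add (psd_kron h2 h3)
  rw [Matrix.posSemidef_iff_dotProduct_mulVec] at hsum ⊢
  constructor
  · unfold Matrix.IsHermitian at *
    rw [Matrix.conjTranspose_smul, hsum.1]
    simp
  · intro x
    have := hsum.2 x
    simp only [Matrix.smul_mulVec, dotProduct_smul, smul_eq_mul]
    positivity
end

section
/- Let k ≥ 1 and n ≥ 1, let ε ≥ 0, and let u, v : Fin k → EuclideanSpace ℝ (Fin n) be families of nonzero vectors with Σᵢ ‖u i‖² = 1 and Σᵢ ‖v i‖² = 1. If Σᵢ ⟨u i, v i⟩ ≥ 1 − ε, then Σᵢ ⟨u i, v i⟩² / (‖u i‖ · ‖v i‖) ≥ 1 − 2ε. -/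
open scoped RealInnerProductSpace

/-- If `u`, `v` are families of nonzero vectors with `∑ ‖u i‖² = ∑ ‖v i‖² = 1` and
`∑ ⟪u i, v i⟫ ≥ 1 − ε`, then `∑ ⟪u i, v i⟫² / (‖u i‖·‖v i‖) ≥ 1 − 2ε`. -/
theorem unique_rounding_psucc2 (k n : ℕ) (hk : 1 ≤ k) (hn : 1 ≤ n)
    (ε : ℝ) (hε : 0 ≤ ε)
    (u v : Fin k → EuclideanSpace ℝ (Fin n))
    (hu0 : ∀ i, u i ≠ 0) (hv0 : ∀ i, v i ≠ 0)
    (hu : ∑ i, ‖u i‖ ^ 2 = 1) (hv : ∑ i, ‖v i‖ ^ 2 = 1)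
    (hsum : ∑ i, ⟪u i, v i⟫ ≥ 1 - ε) :
    ∑ i, ⟪u i, v i⟫ ^ 2 / (‖u i‖ * ‖v i‖) ≥ 1 - 2 * ε := by
  have key : ∀ i ∈ Finset.univ (α := Fin k),
      2 * ⟪u i, v i⟫ - ‖u i‖ * ‖v i‖ ≤ ⟪u i, v i⟫ ^ 2 / (‖u i‖ * ‖v i‖) := by
    intro i _
    have ha : 0 < ‖u i‖ * ‖v i‖ :=
      mul_pos (norm_pos_iff.mpr (hu0 i)) (norm_pos_iff.mpr (hv0 i))
    rw [le_div_iff₀ ha]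
    nlinarith [sq_nonneg (⟪u i, v i⟫ - ‖u i‖ * ‖v i‖)]
  have hab : ∑ i, ‖u i‖ * ‖v i‖ ≤ 1 := by
    have h2 : ∑ i, ‖u i‖ * ‖v i‖ ≤ ∑ i, (‖u i‖ ^ 2 + ‖v i‖ ^ 2) / 2 :=
      Finset.sum_le_sum fun i _ => by nlinarith [sq_nonneg (‖u i‖ - ‖v i‖)]
    have h3 : ∑ i, (‖u i‖ ^ 2 + ‖v i‖ ^ 2) / 2 = 1 := by
      rw [← Finset.sum_div, Finset.sum_add_distrib, hu, hv]; norm_num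
    linarith
  have hmain : ∑ i, (2 * ⟪u i, v i⟫ - ‖u i‖ * ‖v i‖)
      ≤ ∑ i, ⟪u i, v i⟫ ^ 2 / (‖u i‖ * ‖v i‖) := Finset.sum_le_sum key
  have hexp : ∑ i, (2 * ⟪u i, v i⟫ - ‖u i‖ * ‖v i‖)
      = 2 * (∑ i, ⟪u i, v i⟫) - ∑ i, ‖u i‖ * ‖v i‖ := by
    rw [Finset.sum_sub_distrib, Finset.mul_sum]
  linarith [hmain, hexp ▸ hmain]
end

section
/- Let k ≥ 1 and n ≥ 1, let ε ≥ 0, and let u, v : Fin k → EuclideanSpace ℝ (Fin n) satisfy: (a) ⟨u i, u j⟩ = 0 and ⟨v i, v j⟩ = 0 for all i ≠ j; (b) Σᵢ u i = Σᵢ v i = z where ‖z‖ = 1; (c) ⟨u i, v j⟩ ≥ 0 for all i, j; (d) Σᵢ ⟨u i, v i⟩ ≥ 1 − ε. Then (1/2) · Σᵢ |‖u i‖² − ‖v i‖²| ≤ ε. -/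
open scoped RealInnerProductSpace

/-- Under the SDP feasibility constraints of a unique game, if `∑ ⟪u i, v i⟫ ≥ 1 − ε`
then `(1/2)·∑ |‖u i‖² − ‖v i‖²| ≤ ε`. -/
theorem sdp_marginal_difference (k n : ℕ) (hk : 1 ≤ k) (hn : 1 ≤ n)
    (ε : ℝ) (hε : 0 ≤ ε)
    (u v : Fin k → EuclideanSpace ℝ (Fin n)) (z : EuclideanSpace ℝ (Fin n))
    (huu : ∀ i j, i ≠ j → ⟪u i, u j⟫ = 0)
    (hvv : ∀ i j, i ≠ j → ⟪v i, v j⟫ = 0)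
    (huz : ∑ i, u i = z) (hvz : ∑ i, v i = z) (hz : ‖z‖ = 1)
    (huv : ∀ i j, 0 ≤ ⟪u i, v j⟫)
    (hsum : ∑ i, ⟪u i, v i⟫ ≥ 1 - ε) :
    (1 / 2) * ∑ i, |‖u i‖ ^ 2 - ‖v i‖ ^ 2| ≤ ε := by
  set g : Fin k → Fin k → ℝ := fun i j => ⟪u i, v j⟫ with hg
  -- total mass is 1
  have hT : ∑ i, ∑ j, g i j = 1 := by
    have h1 : ∑ i, ∑ j, g i j = ⟪z, z⟫ := by
      have : ⟪(∑ i, u i), (∑ j, v j)⟫ = ∑ i, ∑ j, g i j := by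
        rw [sum_inner]
        exact Finset.sum_congr rfl fun i _ => by rw [inner_sum]
      rw [← this, huz, hvz]
    rw [h1, real_inner_self_eq_norm_sq, hz]; norm_num
  -- marginals
  have h1 : ∀ i, ‖u i‖ ^ 2 = ∑ j, g i j := by
    intro i
    have : ⟪u i, z⟫ = ∑ j, g i j := by rw [← hvz, inner_sum]
    rw [← this, ← huz, inner_sum]
    rw [Finset.sum_eq_single i (fun j _ hj => huu i j (Ne.symm hj)) (by simp)]
    rw [real_inner_self_eq_norm_sq]
  have h2 : ∀ i, ‖v i‖ ^ 2 = ∑ j, g j i := by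
    intro i
    have : ⟪z, v i⟫ = ∑ j, g j i := by rw [← huz, sum_inner]
    rw [← this, ← hvz, sum_inner]
    rw [Finset.sum_eq_single i (fun j _ hj => hvv j i hj) (by simp)]
    rw [real_inner_self_eq_norm_sq]
  have key : ∀ i, |‖u i‖ ^ 2 - ‖v i‖ ^ 2| ≤
      (∑ j ∈ Finset.univ.erase i, g i j) + (∑ j ∈ Finset.univ.erase i, g j i) := by
    intro i
    have hA : (0:ℝ) ≤ ∑ j ∈ Finset.univ.erase i, g i j :=
      Finset.sum_nonneg fun j _ => huv i j
    have hB : (0:ℝ) ≤ ∑ j ∈ Finset.univ.erase i, g j i :=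
      Finset.sum_nonneg fun j _ => huv j i
    have e1 : ‖u i‖ ^ 2 = g i i + ∑ j ∈ Finset.univ.erase i, g i j := by
      rw [h1 i, ← Finset.add_sum_erase _ _ (Finset.mem_univ i)]
    have e2 : ‖v i‖ ^ 2 = g i i + ∑ j ∈ Finset.univ.erase i, g j i := by
      rw [h2 i, ← Finset.add_sum_erase _ _ (Finset.mem_univ i)]
    rw [e1, e2, abs_sub_le_iff]
    constructor <;> linarith
  have sumA : ∑ i, ∑ j ∈ Finset.univ.erase i, g i j = 1 - ∑ i, g i i := by
    rw [← hT, ← Finset.sum_sub_distrib]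
    exact Finset.sum_congr rfl fun i _ => by
      rw [Finset.sum_erase_eq_sub (Finset.mem_univ i)]
  have sumB : ∑ i, ∑ j ∈ Finset.univ.erase i, g j i = 1 - ∑ i, g i i := by
    have hT' : ∑ i, ∑ j, g j i = 1 := by rw [Finset.sum_comm]; exact hT
    rw [← hT', ← Finset.sum_sub_distrib]
    exact Finset.sum_congr rfl fun i _ => by
      rw [Finset.sum_erase_eq_sub (Finset.mem_univ i)]
  have hstep : ∑ i, |‖u i‖ ^ 2 - ‖v i‖ ^ 2| ≤ 2 * (1 - ∑ i, g i i) := by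
    calc ∑ i, |‖u i‖ ^ 2 - ‖v i‖ ^ 2|
        ≤ ∑ i, ((∑ j ∈ Finset.univ.erase i, g i j) + ∑ j ∈ Finset.univ.erase i, g j i) :=
          Finset.sum_le_sum fun i _ => key i
      _ = 2 * (1 - ∑ i, g i i) := by rw [Finset.sum_add_distrib, sumA, sumB]; ring
  have hD : ∑ i, g i i ≥ 1 - ε := hsum
  linarith
end

section
/- Let k ≥ 1 and n ≥ 1, let ε ≥ 0, and let u, v : Fin k → EuclideanSpace ℝ (Fin n) be families of nonzero vectors satisfying: (a) ⟨u i, u j⟩ = 0 and ⟨v i, v j⟩ = 0 for all i ≠ j; (b) Σᵢ u i = Σᵢ v i = z where ‖z‖ = 1; (c) ⟨u i, v j⟩ ≥ 0 for all i, j; (d) Σᵢ ⟨u i, v i⟩ ≥ 1 − ε. Then Σᵢ (⟨u i, v i⟩² / (‖u i‖² · ‖v i‖²)) · min(‖u i‖², ‖v i‖²) ≥ 1 − 3ε. -/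
open scoped RealInnerProductSpace

lemma unique_rounding_aux (a b c : ℝ) (ha : 0 < a) (hb : 0 < b) (hc : 0 ≤ c)
    (hca : c ≤ a) (hcb : c ≤ b) :
    (c ^ 2 / (a * b)) * min a b ≥ 3 * c - a - b := by
  rcases le_total a b with h | h
  · rw [min_eq_left h]
    have he : c ^ 2 / (a * b) * a = c ^ 2 / b := by
      field_simp
    rw [he, ge_iff_le, le_div_iff₀ hb]
    nlinarith [mul_nonneg (sub_nonneg.2 hca) hb.le, sq_nonneg (c - b)]
  · rw [min_eq_right h]
    have he : c ^ 2 / (a * b) * b = c ^ 2 / a := by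
      field_simp
    rw [he, ge_iff_le, le_div_iff₀ ha]
    nlinarith [mul_nonneg (sub_nonneg.2 hcb) ha.le, sq_nonneg (c - a)]

/-- Under the SDP feasibility constraints of a unique game, if `∑ ⟪u i, v i⟫ ≥ 1 − ε`
then the quantum rounding success quantity
`∑ (⟪u i, v i⟫²/(‖u i‖²·‖v i‖²))·min(‖u i‖², ‖v i‖²)` is at least `1 − 3ε`. -/
theorem unique_rounding_psucc (k n : ℕ) (hk : 1 ≤ k) (hn : 1 ≤ n)
    (ε : ℝ) (hε : 0 ≤ ε)
    (u v : Fin k → EuclideanSpace ℝ (Fin n))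
    (hu0 : ∀ i, u i ≠ 0) (hv0 : ∀ i, v i ≠ 0)
    (z : EuclideanSpace ℝ (Fin n))
    (huu : ∀ i j, i ≠ j → ⟪u i, u j⟫ = 0)
    (hvv : ∀ i j, i ≠ j → ⟪v i, v j⟫ = 0)
    (huz : ∑ i, u i = z) (hvz : ∑ i, v i = z) (hz : ‖z‖ = 1)
    (huv : ∀ i j, 0 ≤ ⟪u i, v j⟫)
    (hsum : ∑ i, ⟪u i, v i⟫ ≥ 1 - ε) :
    ∑ i, (⟪u i, v i⟫ ^ 2 / (‖u i‖ ^ 2 * ‖v i‖ ^ 2)) * min (‖u i‖ ^ 2) (‖v i‖ ^ 2)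
      ≥ 1 - 3 * ε := by
  have hA : ∀ i, ⟪u i, z⟫ = ‖u i‖ ^ 2 := by
    intro i
    rw [← huz, inner_sum, Finset.sum_eq_single i
      (fun j _ hj => huu i j (Ne.symm hj)) (by simp),
      real_inner_self_eq_norm_sq]
  have hB : ∀ i, ⟪z, v i⟫ = ‖v i‖ ^ 2 := by
    intro i
    rw [← hvz, sum_inner, Finset.sum_eq_single i
      (fun j _ hj => hvv j i hj) (by simp),
      real_inner_self_eq_norm_sq]
  have hA2 : ∀ i, ‖u i‖ ^ 2 = ∑ j, ⟪u i, v j⟫ := by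
    intro i; rw [← hA, ← hvz, inner_sum]
  have hB2 : ∀ i, ‖v i‖ ^ 2 = ∑ j, ⟪u j, v i⟫ := by
    intro i; rw [← hB, ← huz, sum_inner]
  have hca : ∀ i, ⟪u i, v i⟫ ≤ ‖u i‖ ^ 2 := by
    intro i; rw [hA2]
    exact Finset.single_le_sum (fun j _ => huv i j) (Finset.mem_univ i)
  have hcb : ∀ i, ⟪u i, v i⟫ ≤ ‖v i‖ ^ 2 := by
    intro i; rw [hB2]
    exact Finset.single_le_sum (fun j _ => huv j i) (Finset.mem_univ i)
  have hsa : ∑ i, ‖u i‖ ^ 2 = 1 := by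
    calc ∑ i, ‖u i‖ ^ 2 = ∑ i, ⟪u i, z⟫ := by
          exact Finset.sum_congr rfl fun i _ => (hA i).symm
      _ = ⟪∑ i, u i, z⟫ := (sum_inner _ _ _).symm
      _ = ⟪z, z⟫ := by rw [huz]
      _ = 1 := by rw [real_inner_self_eq_norm_sq, hz]; norm_num
  have hsb : ∑ i, ‖v i‖ ^ 2 = 1 := by
    calc ∑ i, ‖v i‖ ^ 2 = ∑ i, ⟪z, v i⟫ := by
          exact Finset.sum_congr rfl fun i _ => (hB i).symm
      _ = ⟪z, ∑ i, v i⟫ := (inner_sum _ _ _).symm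
      _ = ⟪z, z⟫ := by rw [hvz]
      _ = 1 := by rw [real_inner_self_eq_norm_sq, hz]; norm_num
  have key : ∀ i ∈ Finset.univ,
      3 * ⟪u i, v i⟫ - ‖u i‖ ^ 2 - ‖v i‖ ^ 2 ≤
        (⟪u i, v i⟫ ^ 2 / (‖u i‖ ^ 2 * ‖v i‖ ^ 2)) * min (‖u i‖ ^ 2) (‖v i‖ ^ 2) := by
    intro i _
    exact unique_rounding_aux _ _ _
      (pow_pos (norm_pos_iff.mpr (hu0 i)) 2)
      (pow_pos (norm_pos_iff.mpr (hv0 i)) 2)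
      (huv i i) (hca i) (hcb i)
  have h1 := Finset.sum_le_sum key
  have h2 : ∑ i, (3 * ⟪u i, v i⟫ - ‖u i‖ ^ 2 - ‖v i‖ ^ 2)
      = 3 * (∑ i, ⟪u i, v i⟫) - (∑ i, ‖u i‖ ^ 2) - (∑ i, ‖v i‖ ^ 2) := by
    simp [Finset.sum_sub_distrib, Finset.mul_sum]
  rw [h2, hsa, hsb] at h1
  linarith
end

section
/- Let k ≥ 1 and n ≥ 1, let 0 ≤ ε, and let u, v : Fin k → EuclideanSpace ℝ (Fin n) with ‖u i‖² = 1/k and ‖v i‖² = 1/k for every i, and Σᵢ ⟨u i, v i⟩ ≥ 1 − ε. Set q := k · Σᵢ ⟨u i, v i⟩². Then q ≤ 1 and q/(2 − q) ≥ 1 − 4ε. -/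
open scoped RealInnerProductSpace

/-- (Uniform unique games.) If all vectors have squared norm `1/k` and
`∑ ⟪u i, v i⟫ ≥ 1 − ε`, then the rounding success probability `q/(2 − q)` with
`q = k·∑ ⟪u i, v i⟫²` satisfies `q ≤ 1` and `q/(2 − q) ≥ 1 − 4ε`. -/
theorem uniform_unique_game_value (k n : ℕ) (hk : 1 ≤ k) (hn : 1 ≤ n)
    (ε : ℝ) (hε : 0 ≤ ε)
    (u v : Fin k → EuclideanSpace ℝ (Fin n))
    (hu : ∀ i, ‖u i‖ ^ 2 = 1 / k) (hv : ∀ i, ‖v i‖ ^ 2 = 1 / k)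
    (hsum : ∑ i, ⟪u i, v i⟫ ≥ 1 - ε)
    (q : ℝ) (hq : q = (k : ℝ) * ∑ i, ⟪u i, v i⟫ ^ 2) :
    q ≤ 1 ∧ q / (2 - q) ≥ 1 - 4 * ε := by
  have hk0 : (0:ℝ) < k := by exact_mod_cast hk
  -- each inner product squared is ≤ 1/k²
  have hbound : ∀ i, ⟪u i, v i⟫ ^ 2 ≤ 1 / (k:ℝ)^2 := by
    intro i
    have h := abs_real_inner_le_norm (u i) (v i)
    have h2 : ⟪u i, v i⟫ ^ 2 ≤ (‖u i‖ * ‖v i‖) ^ 2 := by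
      rw [← sq_abs]
      exact pow_le_pow_left₀ (abs_nonneg _) h 2
    calc ⟪u i, v i⟫ ^ 2 ≤ (‖u i‖ * ‖v i‖) ^ 2 := h2
      _ = ‖u i‖^2 * ‖v i‖^2 := by ring
      _ = 1/(k:ℝ)^2 := by rw [hu i, hv i]; field_simp
  have hq1 : q ≤ 1 := by
    rw [hq]
    have : ∑ i, ⟪u i, v i⟫ ^ 2 ≤ ∑ _i : Fin k, 1/(k:ℝ)^2 :=
      Finset.sum_le_sum fun i _ => hbound i
    have h2 : ∑ _i : Fin k, 1/(k:ℝ)^2 = 1/(k:ℝ) := by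
      simp [Finset.sum_const]
      field_simp
    rw [h2] at this
    calc (k:ℝ) * ∑ i, ⟪u i, v i⟫ ^ 2 ≤ (k:ℝ) * (1/(k:ℝ)) :=
        mul_le_mul_of_nonneg_left this hk0.le
      _ = 1 := by field_simp
  have hq0 : 0 ≤ q := by
    rw [hq]
    positivity
  have hden : 0 < 2 - q := by linarith
  refine ⟨hq1, ?_⟩
  -- Cauchy–Schwarz on sums: (∑ a i)² ≤ k ∑ a i²
  have hcs : (∑ i, ⟪u i, v i⟫) ^ 2 ≤ q := by
    rw [hq]
    have := sq_sum_le_card_mul_sum_sq (s := Finset.univ) (f := fun i => ⟪u i, v i⟫)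
    simpa using this
  rcases le_or_gt (1 - 4*ε) 0 with h | h
  · have : 0 ≤ q / (2 - q) := div_nonneg hq0 hden.le
    linarith
  · -- ε < 1/4, so 1 - ε ≥ 0 and q ≥ (1-ε)²
    have hε1 : 0 ≤ 1 - ε := by linarith
    have hql : (1 - ε)^2 ≤ q := by
      have hs2 : (1 - ε)^2 ≤ (∑ i, ⟪u i, v i⟫)^2 :=
        pow_le_pow_left₀ hε1 hsum 2
      linarith
    rw [ge_iff_le, le_div_iff₀ hden]
    nlinarith [sq_nonneg ε, mul_nonneg (mul_nonneg hε hε) hε]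
end

section
/- Let k ≥ 1 and n ≥ 1, let 0 ≤ ε ≤ 1, and let u, v : Fin k → EuclideanSpace ℝ (Fin n) with Σᵢ ‖u i‖² = 1 and Σᵢ ‖v i‖² = 1. If Σᵢ ⟨u i, v i⟩ ≥ 1 − ε, then (1/2) · Σᵢ |‖u i‖² − ‖v i‖²| ≤ √(2ε). -/
open scoped RealInnerProductSpace

/-- Under only the bipartite SDP constraints `∑ ‖u i‖² = ∑ ‖v i‖² = 1`, if
`∑ ⟪u i, v i⟫ ≥ 1 − ε` then `(1/2)·∑ |‖u i‖² − ‖v i‖²| ≤ √(2ε)`. -/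
theorem bipartite_sdp_marginal_difference (k n : ℕ) (hk : 1 ≤ k) (hn : 1 ≤ n)
    (ε : ℝ) (hε0 : 0 ≤ ε) (hε1 : ε ≤ 1)
    (u v : Fin k → EuclideanSpace ℝ (Fin n))
    (hu : ∑ i, ‖u i‖ ^ 2 = 1) (hv : ∑ i, ‖v i‖ ^ 2 = 1)
    (hsum : ∑ i, ⟪u i, v i⟫ ≥ 1 - ε) :
    (1 / 2) * ∑ i, |‖u i‖ ^ 2 - ‖v i‖ ^ 2| ≤ Real.sqrt (2 * ε) := by
  set a : Fin k → ℝ := fun i => ‖u i‖ with ha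
  set b : Fin k → ℝ := fun i => ‖v i‖ with hb
  have hab : ∀ i, ⟪u i, v i⟫ ≤ a i * b i := fun i => real_inner_le_norm _ _
  have hS : (1 : ℝ) - ε ≤ ∑ i, a i * b i :=
    le_trans hsum (Finset.sum_le_sum fun i _ => hab i)
  have hS1 : ∑ i, a i * b i ≤ 1 := by
    have : ∀ i ∈ Finset.univ, a i * b i ≤ (a i ^ 2 + b i ^ 2) / 2 := by
      intro i _
      nlinarith [sq_nonneg (a i - b i)]
    calc ∑ i, a i * b i ≤ ∑ i, (a i ^ 2 + b i ^ 2) / 2 := Finset.sum_le_sum this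
      _ = 1 := by rw [← Finset.sum_div, Finset.sum_add_distrib, hu, hv]; norm_num
  -- key identities
  have hdiff : ∑ i, (a i - b i) ^ 2 = 2 - 2 * ∑ i, a i * b i := by
    have : ∀ i, (a i - b i) ^ 2 = a i ^ 2 + b i ^ 2 - 2 * (a i * b i) := by
      intro i; ring
    simp_rw [this]
    rw [Finset.sum_sub_distrib, Finset.sum_add_distrib, hu, hv, ← Finset.mul_sum]
    ring
  have hsumsq : ∑ i, (a i + b i) ^ 2 = 2 + 2 * ∑ i, a i * b i := by
    have : ∀ i, (a i + b i) ^ 2 = a i ^ 2 + b i ^ 2 + 2 * (a i * b i) := by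
      intro i; ring
    simp_rw [this]
    rw [Finset.sum_add_distrib, Finset.sum_add_distrib, hu, hv, ← Finset.mul_sum]
    ring
  have habs : ∀ i, |‖u i‖ ^ 2 - ‖v i‖ ^ 2| = |a i - b i| * (a i + b i) := by
    intro i
    have h1 : ‖u i‖ ^ 2 - ‖v i‖ ^ 2 = (a i - b i) * (a i + b i) := by ring
    rw [h1, abs_mul, abs_of_nonneg (by positivity : (0:ℝ) ≤ a i + b i)]
  have hCS : ∑ i, |a i - b i| * (a i + b i) ≤
      Real.sqrt (∑ i, |a i - b i| ^ 2) * Real.sqrt (∑ i, (a i + b i) ^ 2) :=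
    Real.sum_mul_le_sqrt_mul_sqrt _ _ _
  have h1 : ∑ i, |a i - b i| ^ 2 = ∑ i, (a i - b i) ^ 2 := by simp [sq_abs]
  have hd : ∑ i, (a i - b i) ^ 2 ≤ 2 * ε := by rw [hdiff]; linarith
  have hs4 : ∑ i, (a i + b i) ^ 2 ≤ 4 := by rw [hsumsq]; linarith
  have hle : ∑ i, |‖u i‖ ^ 2 - ‖v i‖ ^ 2| ≤ Real.sqrt (2 * ε) * 2 := by
    calc ∑ i, |‖u i‖ ^ 2 - ‖v i‖ ^ 2| = ∑ i, |a i - b i| * (a i + b i) := by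
            simp_rw [habs]
      _ ≤ Real.sqrt (∑ i, |a i - b i| ^ 2) * Real.sqrt (∑ i, (a i + b i) ^ 2) := hCS
      _ ≤ Real.sqrt (2 * ε) * 2 := by
            have h2 : Real.sqrt (∑ i, (a i + b i) ^ 2) ≤ 2 := by
              have : Real.sqrt 4 = 2 := by
                rw [show (4:ℝ) = 2 ^ 2 by norm_num, Real.sqrt_sq]; norm_num
              calc Real.sqrt (∑ i, (a i + b i) ^ 2) ≤ Real.sqrt 4 :=
                    Real.sqrt_le_sqrt hs4
                _ = 2 := this
            have h3 : Real.sqrt (∑ i, |a i - b i| ^ 2) ≤ Real.sqrt (2 * ε) :=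
              Real.sqrt_le_sqrt (by rw [h1]; exact hd)
            exact mul_le_mul h3 h2 (Real.sqrt_nonneg _) (Real.sqrt_nonneg _)
  linarith
end

section
/- Let k ≥ 1 and n ≥ 1, let 0 ≤ ε ≤ 1, and let u, v : Fin k → EuclideanSpace ℝ (Fin n) be families of nonzero vectors with Σᵢ ‖u i‖² = 1 and Σᵢ ‖v i‖² = 1 and Σᵢ ⟨u i, v i⟩ ≥ 1 − ε. Then Σᵢ (⟨u i, v i⟩² / (‖u i‖² · ‖v i‖²)) · min(‖u i‖², ‖v i‖²) ≥ 1 − √(2ε) − 2ε. -/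
set_option maxHeartbeats 1000000


open scoped RealInnerProductSpace

lemma term_ineq_aux (a b c : ℝ) (ha : 0 < a) (hb : 0 < b) (hc : c ^ 2 ≤ a ^ 2 * b ^ 2) :
    c ^ 2 / (a * b) - |a ^ 2 - b ^ 2| / 2 ≤ (c ^ 2 / (a ^ 2 * b ^ 2)) * min (a ^ 2) (b ^ 2) := by
  have hab : 0 < a * b := mul_pos ha hb
  have ht : c ^ 2 / (a ^ 2 * b ^ 2) ≤ 1 := by
    rw [div_le_one (by positivity)]; exact hc
  have ht0 : 0 ≤ c ^ 2 / (a ^ 2 * b ^ 2) := by positivity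
  have hdiv : c ^ 2 / (a * b) = (c ^ 2 / (a ^ 2 * b ^ 2)) * (a * b) := by
    field_simp
  have hmab : min (a ^ 2) (b ^ 2) ≤ a * b := by
    rcases le_total (a ^ 2) (b ^ 2) with h | h
    · rw [min_eq_left h]; nlinarith
    · rw [min_eq_right h]; nlinarith
  have habs : a * b - min (a ^ 2) (b ^ 2) ≤ |a ^ 2 - b ^ 2| / 2 := by
    rcases le_total (a ^ 2) (b ^ 2) with h | h
    · rw [min_eq_left h, abs_of_nonpos (by linarith)]; nlinarith [sq_nonneg (a - b)]
    · rw [min_eq_right h, abs_of_nonneg (by linarith)]; nlinarith [sq_nonneg (a - b)]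
  have key : (c ^ 2 / (a ^ 2 * b ^ 2)) * (a * b - min (a ^ 2) (b ^ 2))
      ≤ a * b - min (a ^ 2) (b ^ 2) :=
    mul_le_of_le_one_left (by linarith) ht
  rw [hdiv]
  nlinarith [key, habs]

/-- Under only the bipartite SDP constraints `∑ ‖u i‖² = ∑ ‖v i‖² = 1`, if
`∑ ⟪u i, v i⟫ ≥ 1 − ε` then the rounding success quantity
`∑ (⟪u i, v i⟫²/(‖u i‖²·‖v i‖²))·min(‖u i‖², ‖v i‖²)` is at least `1 − √(2ε) − 2ε`. -/
theorem bipartite_sdp_rounding (k n : ℕ) (hk : 1 ≤ k) (hn : 1 ≤ n)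
    (ε : ℝ) (hε0 : 0 ≤ ε) (hε1 : ε ≤ 1)
    (u v : Fin k → EuclideanSpace ℝ (Fin n))
    (hu0 : ∀ i, u i ≠ 0) (hv0 : ∀ i, v i ≠ 0)
    (hu : ∑ i, ‖u i‖ ^ 2 = 1) (hv : ∑ i, ‖v i‖ ^ 2 = 1)
    (hsum : ∑ i, ⟪u i, v i⟫ ≥ 1 - ε) :
    ∑ i, (⟪u i, v i⟫ ^ 2 / (‖u i‖ ^ 2 * ‖v i‖ ^ 2)) * min (‖u i‖ ^ 2) (‖v i‖ ^ 2)
      ≥ 1 - Real.sqrt (2 * ε) - 2 * ε := by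
  set c : Fin k → ℝ := fun i => ⟪u i, v i⟫ with hc
  have ha : ∀ i, 0 < ‖u i‖ := fun i => norm_pos_iff.mpr (hu0 i)
  have hb : ∀ i, 0 < ‖v i‖ := fun i => norm_pos_iff.mpr (hv0 i)
  have hcab : ∀ i, c i ≤ ‖u i‖ * ‖v i‖ := fun i => real_inner_le_norm (u i) (v i)
  have hcsq : ∀ i, c i ^ 2 ≤ ‖u i‖ ^ 2 * ‖v i‖ ^ 2 := by
    intro i
    have h1 : |c i| ≤ ‖u i‖ * ‖v i‖ := abs_real_inner_le_norm (u i) (v i)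
    nlinarith [abs_nonneg (c i), sq_abs (c i)]
  -- abbreviations
  set A : ℝ := ∑ i, c i ^ 2 / (‖u i‖ * ‖v i‖) with hA
  set D : ℝ := ∑ i, |‖u i‖ ^ 2 - ‖v i‖ ^ 2| with hD
  -- Step 1: termwise bound
  have step1 : A - D / 2 ≤
      ∑ i, (c i ^ 2 / (‖u i‖ ^ 2 * ‖v i‖ ^ 2)) * min (‖u i‖ ^ 2) (‖v i‖ ^ 2) := by
    have := Finset.sum_le_sum (fun i (_ : i ∈ Finset.univ) =>
      term_ineq_aux (‖u i‖) (‖v i‖) (c i) (ha i) (hb i) (hcsq i))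
    calc A - D / 2
        = ∑ i, (c i ^ 2 / (‖u i‖ * ‖v i‖) - |‖u i‖ ^ 2 - ‖v i‖ ^ 2| / 2) := by
          rw [Finset.sum_sub_distrib, ← Finset.sum_div]
      _ ≤ _ := this
  -- Step 2: A ≥ (1-ε)^2
  have hSab : ∑ i, ‖u i‖ * ‖v i‖ ≤ 1 := by
    have hcs := Finset.sum_mul_sq_le_sq_mul_sq Finset.univ (fun i => ‖u i‖) (fun i => ‖v i‖)
    have h0 : 0 ≤ ∑ i, ‖u i‖ * ‖v i‖ :=
      Finset.sum_nonneg fun i _ => by positivity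
    nlinarith [hcs, hu, hv]
  have hA0 : 0 ≤ A := Finset.sum_nonneg fun i _ => by positivity
  have hcsA : (∑ i, c i) ^ 2 ≤ A * (∑ i, ‖u i‖ * ‖v i‖) := by
    have hcs := Finset.sum_mul_sq_le_sq_mul_sq Finset.univ
      (fun i => c i / Real.sqrt (‖u i‖ * ‖v i‖)) (fun i => Real.sqrt (‖u i‖ * ‖v i‖))
    have e1 : ∀ i : Fin k, c i / Real.sqrt (‖u i‖ * ‖v i‖) * Real.sqrt (‖u i‖ * ‖v i‖) = c i := by
      intro i
      have h0 : Real.sqrt (‖u i‖ * ‖v i‖) ≠ 0 :=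
        ne_of_gt (Real.sqrt_pos.mpr (mul_pos (ha i) (hb i)))
      exact div_mul_cancel₀ _ h0
    have e2 : ∀ i : Fin k, (c i / Real.sqrt (‖u i‖ * ‖v i‖)) ^ 2 = c i ^ 2 / (‖u i‖ * ‖v i‖) := by
      intro i
      rw [div_pow, Real.sq_sqrt (le_of_lt (mul_pos (ha i) (hb i)))]
    have e3 : ∀ i : Fin k, Real.sqrt (‖u i‖ * ‖v i‖) ^ 2 = ‖u i‖ * ‖v i‖ := by
      intro i
      exact Real.sq_sqrt (le_of_lt (mul_pos (ha i) (hb i)))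
    simp only [e1, e2, e3] at hcs
    exact hcs
  have hAge : (1 - ε) ^ 2 ≤ A := by
    have hc1 : (1 - ε) ^ 2 ≤ (∑ i, c i) ^ 2 := by
      have h1 : (0:ℝ) ≤ 1 - ε := by linarith
      have h2 : 1 - ε ≤ ∑ i, c i := hsum
      nlinarith
    nlinarith [hcsA, hSab, hA0]
  -- Step 3: D ≤ 2√(2ε)
  have hdiff : ∑ i, (‖u i‖ - ‖v i‖) ^ 2 ≤ 2 * ε := by
    have h1 : ∀ i : Fin k, (‖u i‖ - ‖v i‖) ^ 2 ≤ ‖u i‖ ^ 2 + ‖v i‖ ^ 2 - 2 * c i := by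
      intro i; nlinarith [hcab i]
    have h2 := Finset.sum_le_sum (fun i (_ : i ∈ Finset.univ) => h1 i)
    have h3 : ∑ i, (‖u i‖ ^ 2 + ‖v i‖ ^ 2 - 2 * c i)
        = (∑ i, ‖u i‖ ^ 2) + (∑ i, ‖v i‖ ^ 2) - 2 * ∑ i, c i := by
      rw [Finset.sum_sub_distrib, Finset.sum_add_distrib, ← Finset.mul_sum]
    rw [h3, hu, hv] at h2
    linarith
  have hplus : ∑ i, (‖u i‖ + ‖v i‖) ^ 2 ≤ 4 := by
    have h1 : ∀ i : Fin k, (‖u i‖ + ‖v i‖) ^ 2 ≤ 2 * ‖u i‖ ^ 2 + 2 * ‖v i‖ ^ 2 := by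
      intro i; nlinarith [sq_nonneg (‖u i‖ - ‖v i‖)]
    have h2 := Finset.sum_le_sum (fun i (_ : i ∈ Finset.univ) => h1 i)
    have h3 : ∑ i, (2 * ‖u i‖ ^ 2 + 2 * ‖v i‖ ^ 2)
        = 2 * (∑ i, ‖u i‖ ^ 2) + 2 * (∑ i, ‖v i‖ ^ 2) := by
      rw [Finset.sum_add_distrib, ← Finset.mul_sum, ← Finset.mul_sum]
    rw [h3, hu, hv] at h2
    linarith
  have hD0 : 0 ≤ D := Finset.sum_nonneg fun i _ => abs_nonneg _
  have hDsq : D ^ 2 ≤ 8 * ε := by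
    have hrw : D = ∑ i, (‖u i‖ + ‖v i‖) * |‖u i‖ - ‖v i‖| := by
      apply Finset.sum_congr rfl
      intro i _
      have : ‖u i‖ ^ 2 - ‖v i‖ ^ 2 = (‖u i‖ + ‖v i‖) * (‖u i‖ - ‖v i‖) := by ring
      rw [this, abs_mul, abs_of_pos (add_pos (ha i) (hb i))]
    have hcs := Finset.sum_mul_sq_le_sq_mul_sq Finset.univ
      (fun i => ‖u i‖ + ‖v i‖) (fun i => |‖u i‖ - ‖v i‖|)
    simp only [sq_abs] at hcs
    rw [hrw]
    calc (∑ i, (‖u i‖ + ‖v i‖) * |‖u i‖ - ‖v i‖|) ^ 2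
        ≤ (∑ i, (‖u i‖ + ‖v i‖) ^ 2) * ∑ i, (‖u i‖ - ‖v i‖) ^ 2 := hcs
      _ ≤ 4 * (2 * ε) := by
          apply mul_le_mul hplus hdiff (Finset.sum_nonneg fun i _ => sq_nonneg _) (by norm_num)
      _ = 8 * ε := by ring
  have hDle : D ≤ 2 * Real.sqrt (2 * ε) := by
    have h1 : D ≤ Real.sqrt (8 * ε) := by
      rw [show (8:ℝ) * ε = 2 ^ 2 * (2 * ε) by ring, Real.sqrt_mul (by positivity),
        Real.sqrt_sq (by norm_num : (0:ℝ) ≤ 2)] at *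
      nlinarith [Real.sq_sqrt (by positivity : (0:ℝ) ≤ 2 * ε),
        Real.sqrt_nonneg (2 * ε)]
    rwa [show (8:ℝ) * ε = 2 ^ 2 * (2 * ε) by ring, Real.sqrt_mul (by positivity),
      Real.sqrt_sq (by norm_num : (0:ℝ) ≤ 2)] at h1
  -- combine
  have : 1 - Real.sqrt (2 * ε) - 2 * ε ≤ A - D / 2 := by
    nlinarith [sq_nonneg ε, hAge, hDle]
  linarith [step1]
end

section
/- Let d ≥ 2 and k ≥ 1, let V be a finite set of pairs in Fin k × Fin k such that for each i the set {j | (i,j) ∈ V} has at most d elements and for each j the set {i | (i,j) ∈ V} has at most d elements. Let a : Fin k → Fin k → ℝ be nonnegative with a i j = 0 whenever (i,j) ∉ V and Σ_{(i,j) ∈ V} a i j = 1. Then Σ_{(i,j) ∈ V} (a i j)² / max(Σ_{i'} a i' j, Σ_{j'} a i j') ≥ 1/(10(d−1)), where a term with a i j = 0 is interpreted as 0. -/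
/-- Combinatorial core of the `d`-to-`d` games theorem: if a probability
distribution `a` on `Fin k × Fin k` is supported on a set `V` with all rows and
columns of size at most `d`, then
`∑_{(i,j)∈V} a i j² / max(∑_{i'} a i' j, ∑_{j'} a i j') ≥ 1/(10(d−1))`. -/
theorem d_to_d_rounding (d k : ℕ) (hd : 2 ≤ d) (hk : 1 ≤ k)
    (V : Finset (Fin k × Fin k))
    (hrow : ∀ i : Fin k, (V.filter (fun p => p.1 = i)).card ≤ d)
    (hcol : ∀ j : Fin k, (V.filter (fun p => p.2 = j)).card ≤ d)
    (a : Fin k → Fin k → ℝ)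
    (ha0 : ∀ i j, 0 ≤ a i j)
    (hsupp : ∀ i j, (i, j) ∉ V → a i j = 0)
    (hsum : ∑ p ∈ V, a p.1 p.2 = 1) :
    ∑ p ∈ V, (a p.1 p.2) ^ 2 / max (∑ i', a i' p.2) (∑ j', a p.1 j')
      ≥ 1 / (10 * ((d : ℝ) - 1)) := by
  set M : Fin k × Fin k → ℝ := fun p => max (∑ i', a i' p.2) (∑ j', a p.1 j') with hMdef
  have hM0 : ∀ p, 0 ≤ M p := fun p =>
    le_trans (Finset.sum_nonneg fun i _ => ha0 i p.2) (le_max_left _ _)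
  -- column sums restricted to V
  have hcolsum : ∀ j : Fin k,
      (∑ i', a i' j) = ∑ q ∈ V.filter (fun q => q.2 = j), a q.1 q.2 := by
    intro j
    rw [← Finset.sum_filter_of_ne (p := fun i' => (i', j) ∈ V)
      (fun i _ h => by by_contra hc; exact h (hsupp i j hc))]
    refine Finset.sum_bij (fun i _ => (i, j)) ?_ ?_ ?_ ?_
    · intro i hi
      simp only [Finset.mem_filter, Finset.mem_univ, true_and] at hi ⊢
      exact ⟨hi, trivial⟩
    · intro x hx y hy hxy; exact (Prod.mk.injEq _ _ _ _ ▸ hxy).1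
    · intro q hq
      simp only [Finset.mem_filter, Finset.mem_univ, true_and] at hq
      exact ⟨q.1, by simpa [← hq.2] using hq.1, by simp [← hq.2]⟩
    · intros; rfl
  have hrowsum : ∀ i : Fin k,
      (∑ j', a i j') = ∑ q ∈ V.filter (fun q => q.1 = i), a q.1 q.2 := by
    intro i
    rw [← Finset.sum_filter_of_ne (p := fun j' => (i, j') ∈ V)
      (fun j _ h => by by_contra hc; exact h (hsupp i j hc))]
    refine Finset.sum_bij (fun j _ => (i, j)) ?_ ?_ ?_ ?_
    · intro j hj
      simp only [Finset.mem_filter, Finset.mem_univ, true_and] at hj ⊢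
      exact ⟨hj, trivial⟩
    · intro x hx y hy hxy; exact (Prod.mk.injEq _ _ _ _ ▸ hxy).2
    · intro q hq
      simp only [Finset.mem_filter, Finset.mem_univ, true_and] at hq
      exact ⟨q.2, by simpa [← hq.2] using hq.1, by simp [← hq.2]⟩
    · intros; rfl
  -- bound the total weight of columns hit by V
  have hcolbound : ∑ p ∈ V, (∑ i', a i' p.2) ≤ (d : ℝ) := by
    calc ∑ p ∈ V, (∑ i', a i' p.2)
        = ∑ p ∈ V, ∑ q ∈ V, (if q.2 = p.2 then a q.1 q.2 else 0) := by
          refine Finset.sum_congr rfl fun p _ => ?_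
          rw [hcolsum p.2, Finset.sum_filter]
      _ = ∑ q ∈ V, ∑ p ∈ V, (if q.2 = p.2 then a q.1 q.2 else 0) := Finset.sum_comm
      _ = ∑ q ∈ V, ((V.filter (fun p => p.2 = q.2)).card : ℝ) * a q.1 q.2 := by
          refine Finset.sum_congr rfl fun q _ => ?_
          rw [← Finset.sum_filter]
          have : (V.filter (fun p => q.2 = p.2)) = (V.filter (fun p => p.2 = q.2)) := by
            apply Finset.filter_congr; intro p _; simp [eq_comm]
          rw [this, Finset.sum_const, nsmul_eq_mul]
      _ ≤ ∑ q ∈ V, (d : ℝ) * a q.1 q.2 := by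
          refine Finset.sum_le_sum fun q _ => ?_
          exact mul_le_mul_of_nonneg_right (by exact_mod_cast hcol q.2) (ha0 _ _)
      _ = d := by rw [← Finset.mul_sum, hsum, mul_one]
  have hrowbound : ∑ p ∈ V, (∑ j', a p.1 j') ≤ (d : ℝ) := by
    calc ∑ p ∈ V, (∑ j', a p.1 j')
        = ∑ p ∈ V, ∑ q ∈ V, (if q.1 = p.1 then a q.1 q.2 else 0) := by
          refine Finset.sum_congr rfl fun p _ => ?_
          rw [hrowsum p.1, Finset.sum_filter]
      _ = ∑ q ∈ V, ∑ p ∈ V, (if q.1 = p.1 then a q.1 q.2 else 0) := Finset.sum_comm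
      _ = ∑ q ∈ V, ((V.filter (fun p => p.1 = q.1)).card : ℝ) * a q.1 q.2 := by
          refine Finset.sum_congr rfl fun q _ => ?_
          rw [← Finset.sum_filter]
          have : (V.filter (fun p => q.1 = p.1)) = (V.filter (fun p => p.1 = q.1)) := by
            apply Finset.filter_congr; intro p _; simp [eq_comm]
          rw [this, Finset.sum_const, nsmul_eq_mul]
      _ ≤ ∑ q ∈ V, (d : ℝ) * a q.1 q.2 := by
          refine Finset.sum_le_sum fun q _ => ?_
          exact mul_le_mul_of_nonneg_right (by exact_mod_cast hrow q.1) (ha0 _ _)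
      _ = d := by rw [← Finset.mul_sum, hsum, mul_one]
  have hVM : ∑ p ∈ V, M p ≤ 2 * (d : ℝ) := by
    calc ∑ p ∈ V, M p
        ≤ ∑ p ∈ V, ((∑ i', a i' p.2) + (∑ j', a p.1 j')) := by
          refine Finset.sum_le_sum fun p _ => ?_
          exact max_le (le_add_of_nonneg_right (Finset.sum_nonneg fun j _ => ha0 _ _))
            (le_add_of_nonneg_left (Finset.sum_nonneg fun i _ => ha0 _ _))
      _ = (∑ p ∈ V, (∑ i', a i' p.2)) + ∑ p ∈ V, (∑ j', a p.1 j') := Finset.sum_add_distrib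
      _ ≤ (d : ℝ) + d := add_le_add hcolbound hrowbound
      _ = 2 * d := by ring
  set S := V.filter (fun p => 0 < a p.1 p.2) with hSdef
  have hSsub : S ⊆ V := Finset.filter_subset _ _
  have hS1 : ∑ p ∈ S, a p.1 p.2 = 1 := by
    rw [hSdef, Finset.sum_filter_of_ne, hsum]
    intro p _ h
    exact lt_of_le_of_ne (ha0 _ _) (Ne.symm h)
  have hMpos : ∀ p ∈ S, 0 < M p := by
    intro p hp
    rw [hSdef, Finset.mem_filter] at hp
    have h1 : a p.1 p.2 ≤ ∑ j', a p.1 j' :=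
      Finset.single_le_sum (fun j _ => ha0 p.1 j) (Finset.mem_univ p.2)
    exact lt_of_lt_of_le hp.2 (le_trans h1 (le_max_right _ _))
  have hcauchy : (∑ p ∈ S, a p.1 p.2) ^ 2 / (∑ p ∈ S, M p)
      ≤ ∑ p ∈ S, (a p.1 p.2) ^ 2 / M p :=
    Finset.sq_sum_div_le_sum_sq_div S _ hMpos
  rw [hS1, one_pow] at hcauchy
  have hSMpos : 0 < ∑ p ∈ S, M p := by
    have hne : S.Nonempty := by
      by_contra h
      rw [Finset.not_nonempty_iff_eq_empty] at h
      simp [h] at hS1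
    obtain ⟨p, hp⟩ := hne
    exact Finset.sum_pos' (fun q hq => (hMpos q hq).le) ⟨p, hp, hMpos p hp⟩
  have hSM : ∑ p ∈ S, M p ≤ 2 * (d : ℝ) :=
    le_trans (Finset.sum_le_sum_of_subset_of_nonneg hSsub fun p _ _ => hM0 p) hVM
  have hd2 : (2 : ℝ) ≤ d := by exact_mod_cast hd
  have hstep1 : (1 : ℝ) / (10 * ((d : ℝ) - 1)) ≤ 1 / (∑ p ∈ S, M p) := by
    apply one_div_le_one_div_of_le hSMpos
    nlinarith
  have hstep2 : ∑ p ∈ S, (a p.1 p.2) ^ 2 / M p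
      ≤ ∑ p ∈ V, (a p.1 p.2) ^ 2 / M p :=
    Finset.sum_le_sum_of_subset_of_nonneg hSsub
      (fun p _ _ => div_nonneg (sq_nonneg _) (hM0 p))
  calc (1 : ℝ) / (10 * ((d : ℝ) - 1)) ≤ 1 / (∑ p ∈ S, M p) := hstep1
    _ ≤ ∑ p ∈ S, (a p.1 p.2) ^ 2 / M p := hcauchy
    _ ≤ ∑ p ∈ V, (a p.1 p.2) ^ 2 / M p := hstep2
end

section
/- Let Q be a finite type (the question set), k ≥ 1 and d ≥ 1. Let ψ ∈ EuclideanSpace ℂ (Fin d × Fin d) be a unit vector. Let A : Q → Fin k → Matrix (Fin d) (Fin d) ℂ and B : Q → Fin k → Matrix (Fin d) (Fin d) ℂ be such that for every s and a, A s a is an orthogonal projection (Hermitian and idempotent) with Σₐ A s a = 1, and similarly for every t and b, B t b is an orthogonal projection with Σ_b B t b = 1. Then there exist N ≥ 1, vectors u : Q → Fin k → EuclideanSpace ℝ (Fin N), v : Q → Fin k → EuclideanSpace ℝ (Fin N), and z ∈ EuclideanSpace ℝ (Fin N) such that: ‖z‖ = 1; Σₐ u s a = z for every s and Σ_b v t b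 = z for every t; ⟨u s a, u s a'⟩ = 0 and ⟨v t b, v t b'⟩ = 0 whenever a ≠ a' and b ≠ b'; and for all s, t, a, b, ⟨u s a, v t b⟩ = Re ⟨ψ, ((A s a) ⊗ (B t b)) ψ⟩ ≥ 0, where (A s a) ⊗ (B t b) is the Kronecker product acting on EuclideanSpace ℂ (Fin d × Fin d). -/
open Matrix
open scoped Kronecker RealInnerProductSpace

section Aux

variable {m n ι : Type*} [Fintype m] [Fintype n] [Fintype ι]

lemma myKronConjTranspose (M : Matrix m m ℂ) (N : Matrix n n ℂ) :
    (M ⊗ₖ N)ᴴ = Mᴴ ⊗ₖ Nᴴ := by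
  ext ⟨i, j⟩ ⟨k, l⟩
  simp [Matrix.conjTranspose_apply, Matrix.kroneckerMap_apply, star_mul', mul_comm]

lemma mySumKron (s : Finset ι) (M : ι → Matrix m m ℂ) (N : Matrix n n ℂ) :
    (∑ i ∈ s, M i) ⊗ₖ N = ∑ i ∈ s, (M i ⊗ₖ N) := by
  ext ⟨i, j⟩ ⟨k, l⟩
  simp [Matrix.kroneckerMap_apply, Matrix.sum_apply, Finset.sum_mul]

lemma myKronSum (s : Finset ι) (M : Matrix m m ℂ) (N : ι → Matrix n n ℂ) :
    M ⊗ₖ (∑ i ∈ s, N i) = ∑ i ∈ s, (M ⊗ₖ N i) := by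
  ext ⟨i, j⟩ ⟨k, l⟩
  simp [Matrix.kroneckerMap_apply, Matrix.sum_apply, Finset.mul_sum]

lemma mySumMulVec [DecidableEq n] (s : Finset ι) (M : ι → Matrix n n ℂ) (x : n → ℂ) :
    (∑ i ∈ s, M i) *ᵥ x = ∑ i ∈ s, (M i *ᵥ x) := by
  ext j
  simp [Matrix.mulVec, dotProduct, Matrix.sum_apply, Finset.sum_mul]
  rw [Finset.sum_comm]

/-- Orthogonal projections summing to the identity are pairwise orthogonal. -/
lemma myProjOrth [DecidableEq n] [DecidableEq ι]
    (P : ι → Matrix n n ℂ) (hherm : ∀ i, (P i).IsHermitian)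
    (hidem : ∀ i, P i * P i = P i) (hsum : ∑ i, P i = 1)
    {i j : ι} (hij : i ≠ j) : P i * P j = 0 := by
  have key : ∀ j, (Matrix.trace (P i * P j)).re
      = ∑ k, ∑ l, Complex.normSq ((P i * P j) l k) := by
    intro j
    have h1 : Matrix.trace (P i * P j)
        = Matrix.trace ((P i * P j)ᴴ * (P i * P j)) := by
      rw [Matrix.conjTranspose_mul, (hherm i).eq, (hherm j).eq]
      calc Matrix.trace (P i * P j)
          = Matrix.trace (P i * P j * P j) := by
            rw [mul_assoc, hidem j]
        _ = Matrix.trace (P j * (P i * P j)) := by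
            rw [Matrix.trace_mul_comm]
        _ = Matrix.trace (P j * P i * (P i * P j)) := by
            rw [show P j * P i * (P i * P j) = P j * (P i * P i * P j) by
              rw [mul_assoc, ← mul_assoc (P i)], hidem i]
    have h2 : Matrix.trace ((P i * P j)ᴴ * (P i * P j))
        = ∑ k, ∑ l, (Complex.normSq ((P i * P j) l k) : ℂ) := by
      simp only [Matrix.trace, Matrix.diag_apply, Matrix.mul_apply,
        Matrix.conjTranspose_apply]
      refine Finset.sum_congr rfl fun k _ => Finset.sum_congr rfl fun l _ => ?_
      simp [Complex.star_def, Complex.normSq_eq_conj_mul_self]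
    rw [h1, h2]
    push_cast
    simp
  have h2 : ∑ j ∈ Finset.univ.erase i, (P i * P j) = 0 := by
    have hall : ∑ j, P i * P j = P i := by
      rw [← Finset.mul_sum, hsum, mul_one]
    have h := Finset.add_sum_erase Finset.univ (fun j => P i * P j)
      (Finset.mem_univ i)
    rw [hall, hidem i] at h
    exact add_eq_left.mp h
  have h3 : ∑ j ∈ Finset.univ.erase i, (Matrix.trace (P i * P j)).re = 0 := by
    have := congrArg Matrix.trace h2
    rw [Matrix.trace_sum, Matrix.trace_zero] at this
    have := congrArg Complex.re this
    simpa [Complex.re_sum] using this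
  have h4 : ∀ j ∈ Finset.univ.erase i, 0 ≤ (Matrix.trace (P i * P j)).re := by
    intro j _
    rw [key j]
    exact Finset.sum_nonneg fun k _ => Finset.sum_nonneg fun l _ => Complex.normSq_nonneg _
  have h5 : (Matrix.trace (P i * P j)).re = 0 :=
    (Finset.sum_eq_zero_iff_of_nonneg h4).mp h3 j
      (Finset.mem_erase.mpr ⟨fun h => hij h.symm, Finset.mem_univ j⟩)
  rw [key j] at h5
  ext l k
  have h6 : ∀ k ∈ Finset.univ, (0:ℝ) ≤ ∑ l, Complex.normSq ((P i * P j) l k) := by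
    intro k _; exact Finset.sum_nonneg fun l _ => Complex.normSq_nonneg _
  have h7 := (Finset.sum_eq_zero_iff_of_nonneg h6).mp h5 k (Finset.mem_univ k)
  have h8 : ∀ l ∈ Finset.univ, (0:ℝ) ≤ Complex.normSq ((P i * P j) l k) := by
    intro l _; exact Complex.normSq_nonneg _
  have h9 := (Finset.sum_eq_zero_iff_of_nonneg h8).mp h7 l (Finset.mem_univ l)
  simpa using Complex.normSq_eq_zero.mp h9

end Aux

/-- Every projective-measurement strategy for two entangled provers yields a
feasible solution of the SDP relaxation with matching inner products. -/
theorem strategy_to_sdp_solution (Q : Type*) [Fintype Q] (k d : ℕ)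
    (hk : 1 ≤ k) (hd : 1 ≤ d)
    (ψ : EuclideanSpace ℂ (Fin d × Fin d)) (hψ : ‖ψ‖ = 1)
    (A B : Q → Fin k → Matrix (Fin d) (Fin d) ℂ)
    (hAherm : ∀ s a, (A s a).IsHermitian)
    (hAidem : ∀ s a, A s a * A s a = A s a)
    (hAsum : ∀ s, ∑ a, A s a = 1)
    (hBherm : ∀ t b, (B t b).IsHermitian)
    (hBidem : ∀ t b, B t b * B t b = B t b)
    (hBsum : ∀ t, ∑ b, B t b = 1) :
    ∃ N : ℕ, 1 ≤ N ∧
      ∃ (u v : Q → Fin k → EuclideanSpace ℝ (Fin N)) (z : EuclideanSpace ℝ (Fin N)),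
        ‖z‖ = 1 ∧
        (∀ s, ∑ a, u s a = z) ∧ (∀ t, ∑ b, v t b = z) ∧
        (∀ s a a', a ≠ a' → ⟪u s a, u s a'⟫ = 0) ∧
        (∀ t b b', b ≠ b' → ⟪v t b, v t b'⟫ = 0) ∧
        (∀ s t a b,
          ⟪u s a, v t b⟫ =
            (@inner ℂ _ _ ψ ((EuclideanSpace.equiv (Fin d × Fin d) ℂ).symm
                (((A s a) ⊗ₖ (B t b)) *ᵥ (EuclideanSpace.equiv (Fin d × Fin d) ℂ ψ)))).re
          ∧ 0 ≤ ⟪u s a, v t b⟫) := by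
  classical
  letI : InnerProductSpace ℝ (EuclideanSpace ℂ (Fin d × Fin d)) :=
    InnerProductSpace.rclikeToReal ℂ (EuclideanSpace ℂ (Fin d × Fin d))
  haveI : Nontrivial (EuclideanSpace ℂ (Fin d × Fin d)) := nontrivial_of_ne ψ 0 (by
    intro h; rw [h, norm_zero] at hψ; exact one_ne_zero hψ.symm)
  set N := Module.finrank ℝ (EuclideanSpace ℂ (Fin d × Fin d)) with hN
  have hN1 : 1 ≤ N := Module.finrank_pos
  set e := EuclideanSpace.equiv (Fin d × Fin d) ℂ with he
  set op : Matrix (Fin d × Fin d) (Fin d × Fin d) ℂ → EuclideanSpace ℂ (Fin d × Fin d) :=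
    fun M => e.symm (M *ᵥ (e ψ)) with hop_def
  set f := (stdOrthonormalBasis ℝ (EuclideanSpace ℂ (Fin d × Fin d))).repr with hf
  -- key inner product identity
  have hop : ∀ M M' : Matrix (Fin d × Fin d) (Fin d × Fin d) ℂ,
      (inner ℂ (op M) (op M') : ℂ) = inner ℂ ψ (op (Mᴴ * M')) := by
    intro M M'
    have h1 : (inner ℂ (op M) (op M') : ℂ)
        = dotProduct (star (M *ᵥ (e ψ))) (M' *ᵥ (e ψ)) := by
      rw [EuclideanSpace.inner_eq_star_dotProduct, dotProduct_comm]; rfl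
    have h2 : (inner ℂ ψ (op (Mᴴ * M')) : ℂ)
        = dotProduct (star (e ψ)) ((Mᴴ * M') *ᵥ (e ψ)) := by
      rw [EuclideanSpace.inner_eq_star_dotProduct, dotProduct_comm]; rfl
    rw [h1, h2, Matrix.star_mulVec, Matrix.dotProduct_mulVec,
      Matrix.vecMul_vecMul, Matrix.dotProduct_mulVec]
  have hop_sum : ∀ (M : Fin k → Matrix (Fin d × Fin d) (Fin d × Fin d) ℂ),
      op (∑ a, M a) = ∑ a, op (M a) := by
    intro M
    rw [hop_def]
    simp only [mySumMulVec Finset.univ M (e ψ)]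
    exact map_sum (e.symm.toLinearEquiv.toLinearMap).toAddMonoidHom _ _
  have hop_one : op 1 = ψ := by
    rw [hop_def]; simp
  -- the vectors
  refine ⟨N, hN1, fun s a => f (op ((A s a) ⊗ₖ (1 : Matrix (Fin d) (Fin d) ℂ))),
    fun t b => f (op ((1 : Matrix (Fin d) (Fin d) ℂ) ⊗ₖ (B t b))), f ψ, ?_, ?_, ?_, ?_, ?_, ?_⟩
  · rw [f.norm_map]; exact hψ
  · intro s
    dsimp only
    rw [← map_sum, ← hop_sum, ← mySumKron, hAsum, Matrix.one_kronecker_one, hop_one]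
  · intro t
    dsimp only
    rw [← map_sum, ← hop_sum, ← myKronSum, hBsum, Matrix.one_kronecker_one, hop_one]
  · intro s a a' haa
    dsimp only
    rw [f.inner_map_map]
    have : ((A s a) ⊗ₖ (1 : Matrix (Fin d) (Fin d) ℂ))ᴴ *
        ((A s a') ⊗ₖ (1 : Matrix (Fin d) (Fin d) ℂ)) = 0 := by
      rw [myKronConjTranspose, (hAherm s a).eq, Matrix.conjTranspose_one,
        ← Matrix.mul_kronecker_mul,
        myProjOrth (A s) (hAherm s) (hAidem s) (hAsum s) haa, one_mul,
        Matrix.zero_kronecker]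
    rw [real_inner_eq_re_inner ℂ, hop, this]
    have : op 0 = 0 := by rw [hop_def]; simp
    rw [this, inner_zero_right]
    simp
  · intro t b b' hbb
    dsimp only
    rw [f.inner_map_map]
    have : ((1 : Matrix (Fin d) (Fin d) ℂ) ⊗ₖ (B t b))ᴴ *
        ((1 : Matrix (Fin d) (Fin d) ℂ) ⊗ₖ (B t b')) = 0 := by
      rw [myKronConjTranspose, (hBherm t b).eq, Matrix.conjTranspose_one,
        ← Matrix.mul_kronecker_mul,
        myProjOrth (B t) (hBherm t) (hBidem t) (hBsum t) hbb, one_mul,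
        Matrix.kronecker_zero]
    rw [real_inner_eq_re_inner ℂ, hop, this]
    have : op 0 = 0 := by rw [hop_def]; simp
    rw [this, inner_zero_right]
    simp
  · intro s t a b
    dsimp only
    have hmul : ((A s a) ⊗ₖ (1 : Matrix (Fin d) (Fin d) ℂ))ᴴ *
        ((1 : Matrix (Fin d) (Fin d) ℂ) ⊗ₖ (B t b)) = (A s a) ⊗ₖ (B t b) := by
      rw [myKronConjTranspose, (hAherm s a).eq, Matrix.conjTranspose_one,
        ← Matrix.mul_kronecker_mul, mul_one, one_mul]
    have hherm : ((A s a) ⊗ₖ (B t b))ᴴ = (A s a) ⊗ₖ (B t b) := by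
      rw [myKronConjTranspose, (hAherm s a).eq, (hBherm t b).eq]
    have hidem2 : ((A s a) ⊗ₖ (B t b)) * ((A s a) ⊗ₖ (B t b))
        = (A s a) ⊗ₖ (B t b) := by
      rw [← Matrix.mul_kronecker_mul, hAidem s a, hBidem t b]
    have hval : ⟪f (op ((A s a) ⊗ₖ (1 : Matrix (Fin d) (Fin d) ℂ))),
        f (op ((1 : Matrix (Fin d) (Fin d) ℂ) ⊗ₖ (B t b)))⟫
        = (inner ℂ ψ (op ((A s a) ⊗ₖ (B t b))) : ℂ).re := by
      rw [f.inner_map_map, real_inner_eq_re_inner ℂ, hop, hmul]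
      rfl
    constructor
    · exact hval
    · rw [hval]
      have : (inner ℂ ψ (op ((A s a) ⊗ₖ (B t b))) : ℂ)
          = inner ℂ (op ((A s a) ⊗ₖ (B t b))) (op ((A s a) ⊗ₖ (B t b))) := by
        rw [hop, hherm, hidem2]
      rw [this]
      exact inner_self_nonneg (𝕜 := ℂ)
end

section
/- Let m ≥ 1 and 0 ≤ ε ≤ 1, and set k = 2m, a = √((1−ε)/k), b = √(2ε/k). Let E be a real inner product space and let e : Fin k → E and f : Fin m → E be vectors such that the combined family is orthonormal: ‖e i‖ = 1, ‖f j‖ = 1, ⟨e i, e i'⟩ = 0 for i ≠ i', ⟨f j, f j'⟩ = 0 for j ≠ j', and ⟨e i, f j⟩ = 0 for all i, j. Define u, v : Fin k → E by: for i with i.val < m, u i = a • e i + b • f ⟨i.val, _⟩ and v i = a • e i; for i with i.val ≥ m, u i = a • e i and v i = a • e i + b • f ⟨i.val − m, _⟩. Then: (i) ⟨u i, u j⟩ = 0 and ⟨v i, v j⟩ = 0 for i ≠ j; (ii) Σᵢ u i = Σᵢ v i and ‖Σᵢ u i‖ = 1; (iii) ⟨u i, v j⟩ ≥ 0 for all i,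 j; and (iv) Σᵢ ⟨u i, v i⟩ = 1 − ε. -/
set_option maxHeartbeats 1000000


open scoped RealInnerProductSpace

/-- Local tightness of the quantum rounding analysis: the explicit vector families
`u i = a·e i + b·f i, v i = a·e i` (for `i < m`) and `u i = a·e i, v i = a·e i + b·f (i−m)`
(for `i ≥ m`) satisfy all SDP constraints for one pair of questions and have
objective value exactly `1 − ε`. -/
theorem rounding_locally_tight (m : ℕ) (hm : 1 ≤ m)
    (ε : ℝ) (hε0 : 0 ≤ ε) (hε1 : ε ≤ 1)
    (a b : ℝ)
    (ha : a = Real.sqrt ((1 - ε) / (2 * m)))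
    (hb : b = Real.sqrt (2 * ε / (2 * m)))
    (E : Type*) [NormedAddCommGroup E] [InnerProductSpace ℝ E]
    (e : Fin (2 * m) → E) (f : Fin m → E)
    (he : ∀ i, ‖e i‖ = 1) (hf : ∀ j, ‖f j‖ = 1)
    (hee : ∀ i i', i ≠ i' → ⟪e i, e i'⟫ = 0)
    (hff : ∀ j j', j ≠ j' → ⟪f j, f j'⟫ = 0)
    (hef : ∀ i j, ⟪e i, f j⟫ = 0)
    (u v : Fin (2 * m) → E)
    (hu1 : ∀ (i : Fin (2 * m)) (h : (i : ℕ) < m), u i = a • e i + b • f ⟨(i : ℕ), h⟩)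
    (hu2 : ∀ i : Fin (2 * m), m ≤ (i : ℕ) → u i = a • e i)
    (hv1 : ∀ i : Fin (2 * m), (i : ℕ) < m → v i = a • e i)
    (hv2 : ∀ (i : Fin (2 * m)) (h : m ≤ (i : ℕ)),
      v i = a • e i + b • f ⟨(i : ℕ) - m, by omega⟩) :
    (∀ i j, i ≠ j → ⟪u i, u j⟫ = 0 ∧ ⟪v i, v j⟫ = 0) ∧
    (∑ i, u i = ∑ i, v i ∧ ‖∑ i, u i‖ = 1) ∧
    (∀ i j, 0 ≤ ⟪u i, v j⟫) ∧
    (∑ i, ⟪u i, v i⟫ = 1 - ε) := by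
  have hm0 : (0:ℝ) < m := by exact_mod_cast hm
  have hm' : (0:ℝ) < 2 * m := by linarith
  have ha0 : 0 ≤ a := ha ▸ Real.sqrt_nonneg _
  have hb0 : 0 ≤ b := hb ▸ Real.sqrt_nonneg _
  have ha2 : a * a = (1 - ε) / (2 * m) := by
    rw [ha]; exact Real.mul_self_sqrt (div_nonneg (by linarith) hm'.le)
  have hb2 : b * b = 2 * ε / (2 * m) := by
    rw [hb]; exact Real.mul_self_sqrt (div_nonneg (by linarith) hm'.le)
  have hee1 : ∀ i, ⟪e i, e i⟫ = 1 := fun i => by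
    rw [real_inner_self_eq_norm_mul_norm, he i, mul_one]
  have hff1 : ∀ j, ⟪f j, f j⟫ = 1 := fun j => by
    rw [real_inner_self_eq_norm_mul_norm, hf j, mul_one]
  have hfe : ∀ j i, ⟪f j, e i⟫ = 0 := fun j i => by
    rw [real_inner_comm]; exact hef i j
  -- splitting sums over Fin (2*m)
  have split : ∀ (w : Fin (2*m) → E), ∑ i, w i =
      ∑ j : Fin m, w ⟨(j:ℕ), by omega⟩ + ∑ j : Fin m, w ⟨m + (j:ℕ), by omega⟩ := by
    intro w
    rw [← (Fintype.sum_equiv (finCongr (show m + m = 2*m by omega))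
      (fun i : Fin (m+m) => w ⟨(i:ℕ), by omega⟩) w (fun i => rfl)),
      Fin.sum_univ_add]
    rfl
  have hsum_u : ∑ i, u i = a • (∑ i, e i) + b • (∑ j, f j) := by
    rw [split u, split e]
    have h1 : ∀ j : Fin m, u ⟨(j:ℕ), by omega⟩ = a • e ⟨(j:ℕ), by omega⟩ + b • f j := by
      intro j
      rw [hu1 _ (show ((⟨(j:ℕ), by omega⟩ : Fin (2*m)) : ℕ) < m from j.isLt)]
    have h2 : ∀ j : Fin m, u ⟨m + (j:ℕ), by omega⟩ = a • e ⟨m + (j:ℕ), by omega⟩ := by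
      intro j; exact hu2 _ (by simp)
    simp only [h1, h2, Finset.sum_add_distrib, ← Finset.smul_sum, smul_add]
    abel
  have hsum_v : ∑ i, v i = a • (∑ i, e i) + b • (∑ j, f j) := by
    rw [split v, split e]
    have h1 : ∀ j : Fin m, v ⟨(j:ℕ), by omega⟩ = a • e ⟨(j:ℕ), by omega⟩ := by
      intro j; exact hv1 _ j.isLt
    have h2 : ∀ j : Fin m, v ⟨m + (j:ℕ), by omega⟩ = a • e ⟨m + (j:ℕ), by omega⟩ + b • f j := by
      intro j
      rw [hv2 _ (show m ≤ ((⟨m + (j:ℕ), by omega⟩ : Fin (2*m)) : ℕ) from Nat.le_add_right _ _)]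
      have hidx : (⟨((⟨m + (j:ℕ), by omega⟩ : Fin (2*m)) : ℕ) - m, by omega⟩ : Fin m) = j := by
        ext
        simp
      rw [hidx]
    simp only [h1, h2, Finset.sum_add_distrib, ← Finset.smul_sum, smul_add]
    abel
  refine ⟨?_, ⟨?_, ?_⟩, ?_, ?_⟩
  · -- orthogonality
    intro i j hij
    have hij' : (i:ℕ) ≠ (j:ℕ) := fun h => hij (Fin.ext h)
    constructor
    · rcases lt_or_ge (i:ℕ) m with hi | hi <;> rcases lt_or_ge (j:ℕ) m with hj | hj
      · have hneq : (⟨(i:ℕ), hi⟩ : Fin m) ≠ ⟨(j:ℕ), hj⟩ := by simp only [ne_eq, Fin.mk.injEq]; exact hij'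
        rw [hu1 i hi, hu1 j hj]
        simp only [inner_add_left, inner_add_right, real_inner_smul_left, real_inner_smul_right,
          hef, hfe, hee i j hij, hff _ _ hneq, mul_zero, add_zero, zero_add]
      · rw [hu1 i hi, hu2 j hj]
        simp only [inner_add_left, real_inner_smul_left, real_inner_smul_right,
          hfe, hee i j hij, mul_zero, add_zero, zero_add]
      · rw [hu2 i hi, hu1 j hj]
        simp only [inner_add_right, real_inner_smul_left, real_inner_smul_right,
          hef, hee i j hij, mul_zero, add_zero, zero_add]
      · rw [hu2 i hi, hu2 j hj]
        simp only [real_inner_smul_left, real_inner_smul_right, hee i j hij, mul_zero]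
    · rcases lt_or_ge (i:ℕ) m with hi | hi <;> rcases lt_or_ge (j:ℕ) m with hj | hj
      · rw [hv1 i hi, hv1 j hj]
        simp only [real_inner_smul_left, real_inner_smul_right, hee i j hij, mul_zero]
      · rw [hv1 i hi, hv2 j hj]
        simp only [inner_add_right, real_inner_smul_left, real_inner_smul_right,
          hef, hee i j hij, mul_zero, add_zero, zero_add]
      · rw [hv2 i hi, hv1 j hj]
        simp only [inner_add_left, real_inner_smul_left, real_inner_smul_right,
          hfe, hee i j hij, mul_zero, add_zero, zero_add]
      · have hneq : (⟨(i:ℕ) - m, by omega⟩ : Fin m) ≠ ⟨(j:ℕ) - m, by omega⟩ := by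
          intro h
          exact hij' (by have := congrArg Fin.val h; simp at this; omega)
        rw [hv2 i hi, hv2 j hj]
        simp only [inner_add_left, inner_add_right, real_inner_smul_left, real_inner_smul_right,
          hef, hfe, hee i j hij, hff _ _ hneq, mul_zero, add_zero, zero_add]
  · rw [hsum_u, hsum_v]
  · -- norm of the sum
    have hXX : ⟪∑ i, e i, ∑ i, e i⟫ = (2*m : ℝ) := by
      rw [inner_sum]
      have : ∀ j : Fin (2*m), ⟪∑ i, e i, e j⟫ = 1 := by
        intro j
        rw [sum_inner]
        rw [Finset.sum_eq_single j (fun i _ hne => hee i j hne) (by simp)]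
        exact hee1 j
      simp [this]
    have hYY : ⟪∑ j, f j, ∑ j, f j⟫ = (m : ℝ) := by
      rw [inner_sum]
      have : ∀ j : Fin m, ⟪∑ i, f i, f j⟫ = 1 := by
        intro j
        rw [sum_inner]
        rw [Finset.sum_eq_single j (fun i _ hne => hff i j hne) (by simp)]
        exact hff1 j
      simp [this]
    have hXY : ⟪∑ i, e i, ∑ j, f j⟫ = 0 := by
      rw [inner_sum]
      simp only [sum_inner, hef]
      simp
    have hYX : ⟪∑ j, f j, ∑ i, e i⟫ = 0 := by rw [real_inner_comm]; exact hXY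
    have hval : ⟪∑ i, u i, ∑ i, u i⟫ = 1 := by
      rw [hsum_u]
      simp only [inner_add_left, inner_add_right, real_inner_smul_left, real_inner_smul_right,
        hXX, hYY, hXY, hYX, mul_zero, add_zero, zero_add]
      rw [show a * (a * (2*(m:ℝ))) = a * a * (2*m) by ring,
        show b * (b * (m:ℝ)) = b * b * m by ring, ha2, hb2]
      field_simp
      ring
    have hn : ‖∑ i, u i‖ ^ 2 = 1 := by
      rw [← real_inner_self_eq_norm_sq, hval]
    nlinarith [norm_nonneg (∑ i, u i)]
  · -- nonnegativity of cross inner products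
    intro i j
    rcases lt_or_ge (i:ℕ) m with hi | hi <;> rcases lt_or_ge (j:ℕ) m with hj | hj
    · rw [hu1 i hi, hv1 j hj]
      rcases eq_or_ne i j with rfl | hij
      · simp only [inner_add_left, real_inner_smul_left, real_inner_smul_right,
          hee1, hfe, mul_zero, mul_one, add_zero]
        positivity
      · simp only [inner_add_left, real_inner_smul_left, real_inner_smul_right,
          hfe, hee i j hij, mul_zero, add_zero, zero_add]
        norm_num
    · have hij : i ≠ j := fun h => by rw [h] at hi; omega
      rw [hu1 i hi, hv2 j hj]
      rcases eq_or_ne (⟨(i:ℕ), hi⟩ : Fin m) ⟨(j:ℕ) - m, by omega⟩ with heq | hne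
      · simp only [inner_add_left, inner_add_right, real_inner_smul_left, real_inner_smul_right,
          hef, hfe, hee i j hij, heq, hff1, mul_zero, mul_one, add_zero, zero_add]
        positivity
      · simp only [inner_add_left, inner_add_right, real_inner_smul_left, real_inner_smul_right,
          hef, hfe, hee i j hij, hff _ _ hne, mul_zero, add_zero, zero_add]
        norm_num
    · have hij : i ≠ j := fun h => by rw [h] at hi; omega
      rw [hu2 i hi, hv1 j hj]
      simp only [real_inner_smul_left, real_inner_smul_right, hee i j hij, mul_zero]
      norm_num
    · rw [hu2 i hi, hv2 j hj]
      rcases eq_or_ne i j with rfl | hij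
      · simp only [inner_add_right, real_inner_smul_left, real_inner_smul_right,
          hee1, hef, mul_zero, mul_one, add_zero]
        positivity
      · simp only [inner_add_right, real_inner_smul_left, real_inner_smul_right,
          hef, hee i j hij, mul_zero, add_zero, zero_add]
        norm_num
  · -- objective value
    have diag : ∀ i, ⟪u i, v i⟫ = a * a := by
      intro i
      rcases lt_or_ge (i:ℕ) m with hi | hi
      · rw [hu1 i hi, hv1 i hi]
        simp only [inner_add_left, real_inner_smul_left, real_inner_smul_right, hfe, hee1,
          mul_zero, mul_one, add_zero]
      · rw [hu2 i hi, hv2 i hi]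
        simp only [inner_add_right, real_inner_smul_left, real_inner_smul_right, hef, hee1,
          mul_zero, mul_one, add_zero]
    rw [Finset.sum_congr rfl (fun i _ => diag i)]
    rw [Finset.sum_const, Finset.card_univ, Fintype.card_fin, nsmul_eq_mul, ha2]
    push_cast
    field_simp
end
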